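/- Let λ be a singular strong limit cardinal. Then λ⁺ ∈ I[λ⁺] if and only if S^{λ⁺}_τ ∈ I[λ⁺] for every regular cardinal τ < λ. -/

import Mathlib

set_option autoImplicit false
open Cardinal

universe u

open Cardinal Set

/-- The order type of a set of ordinals. -/
noncomputable def otp (s : Set Ordinal.{u}) : Ordinal.{u + 1} :=
  Ordinal.type ((· < ·) : s → s → Prop)

/-- `C` is a closed subset of the ordinal `δ`: `C ⊆ δ` and `C` contains the supremum of
each of its nonempty subsets whose supremum is below `δ`. -/
def IsClosedIn (C : Set Ordinal.{u}) (δ : Ordinal.{u}) : Prop :=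
  C ⊆ Set.Iio δ ∧ ∀ s ⊆ C, s.Nonempty → sSup s < δ → sSup s ∈ C

/-- `C` is a club (closed unbounded) subset of the ordinal `δ`. -/
def IsClubIn (C : Set Ordinal.{u}) (δ : Ordinal.{u}) : Prop :=
  IsClosedIn C δ ∧ ∀ α < δ, ∃ β ∈ C, α < β

/-- The nonaccumulation points of a set of ordinals `C`. -/
def nacc (C : Set Ordinal.{u}) : Set Ordinal.{u} :=
  {α ∈ C | sSup (C ∩ Set.Iio α) < α}

/-- `A` belongs to the ideal `I[κ]`: `A ⊆ κ`, the set of regular ordinals in `A` is not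
stationary in `κ`, and there is a sequence `⟨P_α : α < κ⟩`, with each `P_α` a family of
fewer than `κ` subsets of `α`, such that every limit `α ∈ A` with `cf α < α` carries a
cofinal subset `x ⊆ α` of order type `< α` all of whose initial segments appear in
`⋃_{γ < α} P_γ`. -/
def MemIdealI (κ : Cardinal.{u}) (A : Set Ordinal.{u}) : Prop :=
  A ⊆ Set.Iio κ.ord ∧
  (∃ E : Set Ordinal.{u}, IsClubIn E κ.ord ∧
    ∀ δ ∈ A, δ ∈ E → δ.cof.ord ≠ δ) ∧
  ∃ P : Ordinal.{u} → Set (Set Ordinal.{u}),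
    (∀ α < κ.ord, (∀ x ∈ P α, x ⊆ Set.Iio α) ∧ Cardinal.mk (P α) < Cardinal.lift.{u+1} κ) ∧
    ∀ α ∈ A, Order.IsSuccLimit α → α.cof.ord < α →
      ∃ x : Set Ordinal.{u}, x ⊆ Set.Iio α ∧ otp x < Ordinal.lift.{u+1} α ∧ sSup x = α ∧
        ∀ β < α, x ∩ Set.Iio β ∈ ⋃ γ ∈ Set.Iio α, P γ

/-- `S^{λ⁺}_τ`: the set of ordinals below `λ⁺` of cofinality `τ`. -/
def cofSet (l τ : Cardinal.{u}) : Set Ordinal.{u} :=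
  {α | α < (Order.succ l).ord ∧ α.cof = τ}

/-- A cardinal satisfying the strong limit hypothesis and singularity is infinite. -/
lemma aux_aleph0_le (l : Cardinal.{u}) (hsing : l.ord.cof < l)
    (hstrong : ∀ μ < l, 2 ^ μ < l) : ℵ₀ ≤ l := by
  by_contra h
  push_neg at h
  obtain ⟨n, rfl⟩ := Cardinal.lt_aleph0.1 h
  have hn : 1 ≤ n := by
    by_contra hn
    interval_cases n
    · simp at hsing
  have h2 : (2 : Cardinal) ^ ((n - 1 : ℕ) : Cardinal) < n := by
    apply hstrong
    exact_mod_cast Nat.sub_lt hn one_pos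
  have hlt : ((2 ^ (n - 1) : ℕ) : Cardinal.{u}) < (n : Cardinal.{u}) := by
    push_cast at h2 ⊢
    exact_mod_cast h2
  have hge : n ≤ 2 ^ (n - 1) := by
    have := Nat.lt_two_pow_self (n := n - 1)
    omega
  exact absurd (Nat.cast_le.2 hge) (not_le.2 hlt)

/-- For a singular strong limit cardinal `l`, `l⁺ ∈ I[l⁺]` if and only if
`S^{l⁺}_τ ∈ I[l⁺]` for every regular cardinal `τ < l`. -/
theorem succ_mem_idealI_iff_cofSets (l : Cardinal.{u})
    (hsing : l.ord.cof < l) (hstrong : ∀ μ < l, 2 ^ μ < l) :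
    MemIdealI (Order.succ l) (Set.Iio (Order.succ l).ord) ↔
      ∀ τ : Cardinal.{u}, τ.IsRegular → τ < l →
        MemIdealI (Order.succ l) (cofSet l τ) := by
  have hinf : ℵ₀ ≤ l := aux_aleph0_le l hsing hstrong
  have hinfs : ℵ₀ ≤ Order.succ l := hinf.trans (Order.le_succ l)
  constructor
  · rintro ⟨hsub, ⟨E, hE, hEreg⟩, P, hP1, hP2⟩ τ hreg hlt
    refine ⟨fun α hα => hα.1, ⟨E, hE, fun δ hδ hδE => hEreg δ hδ.1 hδE⟩, P, hP1, ?_⟩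
    exact fun α hα h1 h2 => hP2 α hα.1 h1 h2
  · intro H
    have H' : ∀ τ : Cardinal.{u}, τ.IsRegular → τ < l →
        ∃ P : Ordinal.{u} → Set (Set Ordinal.{u}),
          (∀ α < (Order.succ l).ord, (∀ x ∈ P α, x ⊆ Set.Iio α) ∧
            Cardinal.mk (P α) < Cardinal.lift.{u+1} (Order.succ l)) ∧
          ∀ α ∈ cofSet l τ, Order.IsSuccLimit α → α.cof.ord < α →
            ∃ x : Set Ordinal.{u}, x ⊆ Set.Iio α ∧ otp x < Ordinal.lift.{u+1} α ∧
              sSup x = α ∧ ∀ β < α, x ∩ Set.Iio β ∈ ⋃ γ ∈ Set.Iio α, P γ :=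
      fun τ h1 h2 => (H τ h1 h2).2.2
    choose P hP using H'
    set ι := {p : Cardinal.{u} // p.IsRegular ∧ p < l} with hι
    set Q : Ordinal.{u} → Set (Set Ordinal.{u}) :=
      fun α => ⋃ i : ι, P i.1 i.2.1 i.2.2 α with hQ
    refine ⟨fun α hα => hα, ⟨Set.Ico l.ord (Order.succ l).ord, ⟨⟨?_, ?_⟩, ?_⟩, ?_⟩,
      Q, ?_, ?_⟩
    · exact Set.Ico_subset_Iio_self
    · intro s hs hne hlt
      refine ⟨?_, hlt⟩
      obtain ⟨a, ha⟩ := hne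
      exact le_trans (hs ha).1
        (le_csSup ⟨(Order.succ l).ord, fun x hx => ((hs hx).2).le⟩ ha)
    · intro α hα
      have hlim : Order.IsSuccLimit ((Order.succ l).ord) := Cardinal.isSuccLimit_ord hinfs
      refine ⟨max (Order.succ α) l.ord, ⟨le_max_right _ _, ?_⟩,
        lt_of_lt_of_le (Order.lt_succ α) (le_max_left _ _)⟩
      exact max_lt (hlim.succ_lt hα) (Cardinal.ord_lt_ord.2 (Order.lt_succ l))
    · rintro δ hδ ⟨h1, h2⟩ heq
      have hcard : δ.card ≤ l := Order.lt_succ_iff.1 (Cardinal.lt_ord.1 h2)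
      have hcof : δ.cof ≤ l := (Ordinal.cof_le_card δ).trans hcard
      have hle : δ ≤ l.ord := heq ▸ Cardinal.ord_le_ord.2 hcof
      have hde : δ = l.ord := le_antisymm hle h1
      have : l.ord.cof = l := by
        rw [← hde]
        exact Cardinal.ord_injective (by rw [heq, hde])
      exact hsing.ne this
    · intro α hα
      constructor
      · intro x hx
        obtain ⟨i, hxi⟩ := Set.mem_iUnion.1 hx
        exact ((hP i.1 i.2.1 i.2.2).1 α hα).1 x hxi
      · have hcalc : Cardinal.mk (Q α) ≤ Cardinal.lift.{u+1} l := by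
          calc Cardinal.mk (Q α)
              ≤ Cardinal.mk ι * ⨆ i : ι, Cardinal.mk (P i.1 i.2.1 i.2.2 α) :=
                Cardinal.mk_iUnion_le _
            _ ≤ Cardinal.lift.{u+1} l * Cardinal.lift.{u+1} l := by
                refine mul_le_mul' ?_ ?_
                · have hinj : Cardinal.mk ι ≤
                      Cardinal.mk (Set.Iio l.ord : Set Ordinal.{u}) := by
                    refine Cardinal.mk_le_of_injective
                      (f := fun i : ι =>
                        (⟨i.1.ord, Cardinal.ord_lt_ord.2 i.2.2⟩ :
                          (Set.Iio l.ord : Set Ordinal.{u}))) ?_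
                    intro a b hab
                    exact Subtype.ext (Cardinal.ord_injective
                      (congrArg Subtype.val hab))
                  rwa [Ordinal.mk_Iio_ordinal, Cardinal.card_ord] at hinj
                · refine ciSup_le' fun i => ?_
                  have := ((hP i.1 i.2.1 i.2.2).1 α hα).2
                  rw [Cardinal.lift_succ] at this
                  exact Order.lt_succ_iff.1 this
            _ = Cardinal.lift.{u+1} l :=
                Cardinal.mul_eq_self (Cardinal.aleph0_le_lift.2 hinf)
        refine lt_of_le_of_lt hcalc ?_
        rw [Cardinal.lift_succ]
        exact Order.lt_succ _
    · intro α hαmem hlim hcof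
      have hreg : α.cof.IsRegular := Cardinal.isRegular_cof hlim
      have hle : α.cof ≤ l :=
        (Ordinal.cof_le_card α).trans (Order.lt_succ_iff.1 (Cardinal.lt_ord.1 hαmem))
      have hlt' : α.cof < l :=
        lt_of_le_of_ne hle fun heq => hsing.ne ((heq ▸ hreg).cof_eq)
      obtain ⟨x, hx1, hx2, hx3, hx4⟩ :=
        (hP α.cof hreg hlt').2 α ⟨hαmem, rfl⟩ hlim hcof
      refine ⟨x, hx1, hx2, hx3, fun β hβ => ?_⟩
      obtain ⟨γ, hγ, hmem'⟩ := Set.mem_iUnion₂.1 (hx4 β hβ)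
      exact Set.mem_iUnion₂.2 ⟨γ, hγ, Set.mem_iUnion.2 ⟨⟨α.cof, hreg, hlt'⟩, hmem'⟩⟩
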